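/- arXiv:1404.3033 — 5 statements merged into one kernel-verified Lean document; each statement's English description precedes it below -/
import Mathlib

section
/- Removal of a targeted vertex via residual thresholds: Let G be a finite simple graph with vertex set V and threshold function t : V → ℕ, let v ∈ V, and let S ⊆ V be a target set with v ∈ S. Let G − v be the subgraph of G induced on V ∖ {v}, and define the residual threshold function t' on V ∖ {v} by t'(w) = t(w) − 1 (truncated subtraction in ℕ) if w is a neighbor of v in G, and t'(w) = t(w) otherwise. Then for every round τ ≥ 0, Active_{G,t}[S,τ] = {v} ∪ Active_{G−v, t'}[S ∖ {v}, τ]. -/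
open Classical

/-- The influence diffusion (activation) process: `Active G t S τ` is the set of vertices
influenced within round `τ`, starting from target set `S`, in the graph `G` with
threshold function `t`. -/
noncomputable def Active {V : Type*} [Fintype V] (G : SimpleGraph V) (t : V → ℕ)
    (S : Finset V) : ℕ → Finset V
  | 0 => S
  | τ + 1 => Active G t S τ ∪
      Finset.univ.filter fun u => t u ≤ (G.neighborFinset u ∩ Active G t S τ).card

lemma card_aux {V : Type*} [Fintype V] (G : SimpleGraph V) (v x : V) (hx : x ≠ v)
    (C : Finset {w : V | w ≠ v}) :
    (G.neighborFinset x ∩ insert v (C.image Subtype.val)).card =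
      (((G.induce {w : V | w ≠ v}).neighborFinset ⟨x, hx⟩) ∩ C).card +
        (if G.Adj v x then 1 else 0) := by
  set B := C.image Subtype.val with hB
  have hvB : v ∉ B := by
    simp only [hB, Finset.mem_image]
    rintro ⟨⟨b, hb⟩, -, h⟩
    exact hb h
  have himg : (((G.induce {w : V | w ≠ v}).neighborFinset ⟨x, hx⟩) ∩ C).image Subtype.val
      = G.neighborFinset x ∩ B := by
    ext a
    simp only [Finset.mem_image, Finset.mem_inter, SimpleGraph.mem_neighborFinset,
      SimpleGraph.comap_adj, Function.Embedding.coe_subtype, hB]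
    constructor
    · rintro ⟨b, ⟨hadj, hbC⟩, rfl⟩
      exact ⟨hadj, b, hbC, rfl⟩
    · rintro ⟨hadj, b, hbC, rfl⟩
      exact ⟨b, ⟨hadj, hbC⟩, rfl⟩
  have hcard : (((G.induce {w : V | w ≠ v}).neighborFinset ⟨x, hx⟩) ∩ C).card
      = (G.neighborFinset x ∩ B).card := by
    rw [← himg, Finset.card_image_of_injective _ Subtype.val_injective]
  rw [hcard]
  by_cases hadj : G.Adj v x
  · have hvN : v ∈ G.neighborFinset x := by
      rw [SimpleGraph.mem_neighborFinset]; exact hadj.symm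
    have : G.neighborFinset x ∩ insert v B = insert v (G.neighborFinset x ∩ B) := by
      ext a
      simp only [Finset.mem_inter, Finset.mem_insert]
      constructor
      · rintro ⟨h1, h2 | h2⟩
        · exact Or.inl h2
        · exact Or.inr ⟨h1, h2⟩
      · rintro (rfl | ⟨h1, h2⟩)
        · exact ⟨hvN, Or.inl rfl⟩
        · exact ⟨h1, Or.inr h2⟩
    rw [this, Finset.card_insert_of_notMem (fun h => hvB (Finset.mem_inter.mp h).2)]
    simp [hadj]
  · have hvN : v ∉ G.neighborFinset x := by
      rw [SimpleGraph.mem_neighborFinset]; exact fun h => hadj h.symm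
    have : G.neighborFinset x ∩ insert v B = G.neighborFinset x ∩ B := by
      ext a
      simp only [Finset.mem_inter, Finset.mem_insert]
      constructor
      · rintro ⟨h1, h2 | h2⟩
        · exact absurd (h2 ▸ h1) hvN
        · exact ⟨h1, h2⟩
      · rintro ⟨h1, h2⟩; exact ⟨h1, Or.inr h2⟩
    rw [this]
    simp [hadj]

/-- Removal of a targeted vertex via residual thresholds: if `v` belongs to the target
set `S`, then the activation process in `G` equals `{v}` together with the activation
process in `G − v` started from `S \ {v}`, where the thresholds of the neighbors of `v`
are decreased by one (truncated subtraction). -/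
theorem active_remove_targeted_vertex {V : Type*} [Fintype V] (G : SimpleGraph V)
    (t : V → ℕ) (v : V) (S : Finset V) (hv : v ∈ S) (τ : ℕ) :
    Active G t S τ =
      insert v ((Active (G.induce {w : V | w ≠ v})
        (fun w => if G.Adj v w.1 then t w.1 - 1 else t w.1)
        (S.subtype (· ∈ {w : V | w ≠ v})) τ).image Subtype.val) := by
  induction τ with
  | zero =>
    simp only [Active]
    ext x
    simp only [Finset.mem_insert, Finset.mem_image, Finset.mem_subtype]
    by_cases hx : x = v
    · subst hx; simp [hv]
    · constructor
      · intro hxS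
        exact Or.inr ⟨⟨x, hx⟩, hxS, rfl⟩
      · rintro (rfl | ⟨b, hbS, rfl⟩)
        · exact hv
        · exact hbS
  | succ τ ih =>
    set C := Active (G.induce {w : V | w ≠ v})
        (fun w => if G.Adj v w.1 then t w.1 - 1 else t w.1)
        (S.subtype (· ∈ {w : V | w ≠ v})) τ with hC
    simp only [Active]
    rw [ih]
    ext x
    simp only [Finset.mem_insert, Finset.mem_union, Finset.mem_filter, Finset.mem_image,
      Finset.mem_univ, true_and]
    by_cases hx : x = v
    · subst hx; simp
    · have hkey := card_aux G v x hx C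
      have hthr : (t x ≤ (G.neighborFinset x ∩ insert v (C.image Subtype.val)).card)
          ↔ (if G.Adj v x then t x - 1 else t x) ≤
            (((G.induce {w : V | w ≠ v}).neighborFinset ⟨x, hx⟩) ∩ C).card := by
        rw [hkey]; by_cases hadj : G.Adj v x <;> simp [hadj] <;> omega
      constructor
      · rintro ((rfl | ⟨b, hbC, rfl⟩) | hle)
        · exact Or.inl rfl
        · exact Or.inr ⟨b, Or.inl hbC, rfl⟩
        · exact Or.inr ⟨⟨x, hx⟩, Or.inr (by convert hthr.mp hle using 2; ext a; simp [hC]), rfl⟩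
      · rintro (rfl | ⟨b, hbC | hble, rfl⟩)
        · exact Or.inl (Or.inl rfl)
        · exact Or.inl (Or.inr ⟨b, hbC, rfl⟩)
        · exact Or.inr (hthr.mpr (by convert hble using 2 <;> (ext a; simp [hC])))
end

section
/- Let G be the complete graph on a finite vertex set V with |V| = n, let t : V → ℕ be a threshold function, and let S ⊆ V be such that for each v ∈ S and each w ∈ V ∖ S one has t(v) ≥ t(w). Then for every round τ ≥ 1, if |Active[S,τ]| ≠ n, then S ∩ {v ∈ V : t(v) ≤ |Active[S,τ−1]|} = ∅. -/
open Classical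

lemma subset_Active {V : Type*} [Fintype V] (G : SimpleGraph V) (t : V → ℕ)
    (S : Finset V) (τ : ℕ) : S ⊆ Active G t S τ := by
  induction τ with
  | zero => simp [Active]
  | succ τ ih => exact ih.trans (Finset.subset_union_left)

/-- On the complete graph, if the target set `S` consists of vertices of highest threshold
and not all `n` vertices are influenced within round `τ + 1 ≥ 1`, then no vertex of `S`
has threshold at most the number of vertices influenced within round `τ`. -/
theorem active_complete_not_fully_active {V : Type*} [Fintype V] (n : ℕ)
    (hn : Fintype.card V = n) (t : V → ℕ) (S : Finset V)
    (hS : ∀ v ∈ S, ∀ w, w ∉ S → t w ≤ t v) (τ : ℕ)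
    (hne : (Active (⊤ : SimpleGraph V) t S (τ + 1)).card ≠ n) :
    S ∩ Finset.univ.filter
      (fun v => t v ≤ (Active (⊤ : SimpleGraph V) t S τ).card) = ∅ := by
  by_contra h
  obtain ⟨v, hv⟩ := Finset.nonempty_iff_ne_empty.mpr h
  rw [Finset.mem_inter, Finset.mem_filter] at hv
  obtain ⟨hvS, -, hvt⟩ := hv
  apply hne
  have huniv : Active (⊤ : SimpleGraph V) t S (τ + 1) = Finset.univ := by
    ext w
    simp only [Finset.mem_univ, iff_true]
    by_contra hw
    have hwA : w ∉ Active (⊤ : SimpleGraph V) t S τ := fun h' =>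
      hw (Finset.mem_union_left _ h')
    have hwS : w ∉ S := fun h' => hwA (subset_Active _ _ _ _ h')
    have hle : t w ≤ t v := hS v hvS w hwS
    apply hw
    refine Finset.mem_union_right _ (Finset.mem_filter.mpr ⟨Finset.mem_univ _, ?_⟩)
    have hsub : Active (⊤ : SimpleGraph V) t S τ
        ⊆ (⊤ : SimpleGraph V).neighborFinset w ∩ Active (⊤ : SimpleGraph V) t S τ := by
      intro x hx
      refine Finset.mem_inter.mpr ⟨?_, hx⟩
      rw [SimpleGraph.mem_neighborFinset, SimpleGraph.top_adj]
      rintro rfl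
      exact hwA hx
    refine hle.trans (hvt.trans (Finset.card_le_card ?_))
    convert hsub using 3
  rw [huniv, Finset.card_univ, hn]
end

section
/- Exchange lemma for complete graphs: Let G be the complete graph on a finite vertex set V, let t : V → ℕ be a threshold function, and let S ⊆ V be such that for each v ∈ S and each w ∈ V ∖ S one has t(v) ≥ t(w). Then for every S' ⊆ V with |S'| = |S| and every round τ ≥ 0, |Active[S,τ]| ≥ |Active[S',τ]|. -/
open Classical

open Finset

/-- Vertices of threshold at most `k`. -/
noncomputable def Tset {V : Type*} [Fintype V] (t : V → ℕ) (k : ℕ) : Finset V :=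
  univ.filter fun u => t u ≤ k

lemma Tset_mono {V : Type*} [Fintype V] (t : V → ℕ) {j k : ℕ} (h : j ≤ k) :
    Tset t j ⊆ Tset t k := by
  intro u hu
  simp only [Tset, mem_filter, mem_univ, true_and] at hu ⊢
  omega

lemma Tset_union {V : Type*} [Fintype V] (t : V → ℕ) (j k : ℕ) :
    Tset t j ∪ Tset t k = Tset t (max j k) := by
  ext u
  simp [Tset, le_max_iff]

lemma active_top_succ {V : Type*} [Fintype V] (t : V → ℕ) (S : Finset V) (τ : ℕ) :
    Active (⊤ : SimpleGraph V) t S (τ + 1)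
      = Active (⊤ : SimpleGraph V) t S τ ∪ Tset t (Active (⊤ : SimpleGraph V) t S τ).card := by
  ext u
  simp only [Active, Tset, mem_union, mem_filter, mem_univ, true_and]
  constructor
  · rintro (h | h)
    · exact Or.inl h
    · exact Or.inr (h.trans (card_le_card inter_subset_right))
  · rintro (h | h)
    · exact Or.inl h
    · by_cases hu : u ∈ Active (⊤ : SimpleGraph V) t S τ
      · exact Or.inl hu
      · right
        refine h.trans (card_le_card ?_)
        refine subset_inter ?_ Subset.rfl
        intro v hv
        rw [SimpleGraph.mem_neighborFinset, SimpleGraph.top_adj]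
        exact fun hne => hu (hne ▸ hv)

lemma card_union_Tset {V : Type*} [Fintype V] (t : V → ℕ) (X : Finset V) (k : ℕ) :
    (X ∪ Tset t k).card = (X \ Tset t k).card + (Tset t k).card :=
  (card_sdiff_add_card X (Tset t k)).symm

/-- Exchange lemma for complete graphs: a target set consisting of vertices of highest
threshold influences, at every round, at least as many vertices as any other target set
of the same cardinality. -/
theorem active_complete_exchange {V : Type*} [Fintype V] (t : V → ℕ) (S : Finset V)
    (hS : ∀ v ∈ S, ∀ w, w ∉ S → t w ≤ t v)
    (S' : Finset V) (hcard : S'.card = S.card) (τ : ℕ) :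
    (Active (⊤ : SimpleGraph V) t S' τ).card ≤ (Active (⊤ : SimpleGraph V) t S τ).card := by
  set G : SimpleGraph V := ⊤
  -- main invariant
  have main : ∀ τ : ℕ,
      (∀ k : ℕ, ((Active G t S' τ) ∪ Tset t k).card ≤ ((Active G t S τ) ∪ Tset t k).card)
      ∧ (Active G t S' τ).card ≤ (Active G t S τ).card := by
    intro τ
    induction τ with
    | zero =>
      have h0 : Active G t S 0 = S := rfl
      have h0' : Active G t S' 0 = S' := rfl
      rw [h0, h0']
      constructor
      · intro k
        rw [card_union_Tset, card_union_Tset]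
        have hsd : (S' \ Tset t k).card ≤ (S \ Tset t k).card := by
          by_cases hcase : ∀ w, w ∉ S → t w ≤ k
          · -- all vertices outside S have small threshold; S' \ T ⊆ S \ T
            apply card_le_card
            intro u hu
            simp only [mem_sdiff, Tset, mem_filter, mem_univ, true_and, not_le] at hu ⊢
            refine ⟨?_, hu.2⟩
            by_contra hnot
            exact absurd (hcase u hnot) (by omega)
          · -- some w outside S has t w > k; then every v ∈ S has t v > k, so S \ T = S
            push_neg at hcase
            obtain ⟨w, hwS, hwk⟩ := hcase
            have : S \ Tset t k = S := by
              apply sdiff_eq_self_of_disjoint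
              rw [disjoint_left]
              intro v hv hvT
              simp only [Tset, mem_filter, mem_univ, true_and] at hvT
              have := hS v hv w hwS
              omega
            rw [this, ← hcard]
            exact card_le_card (sdiff_subset)
        omega
      · simpa [Active] using hcard.le
    | succ n ih =>
      set A := Active G t S n
      set B := Active G t S' n
      have hstepA : Active G t S (n + 1) = A ∪ Tset t A.card := active_top_succ t S n
      have hstepB : Active G t S' (n + 1) = B ∪ Tset t B.card := active_top_succ t S' n
      have hba : B.card ≤ A.card := ih.2
      have key : ∀ k : ℕ, (B ∪ Tset t B.card ∪ Tset t k).card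
          ≤ (A ∪ Tset t A.card ∪ Tset t k).card := by
        intro k
        rw [union_assoc, union_assoc, Tset_union, Tset_union]
        have h1 : (B ∪ Tset t (max B.card k)).card ≤ (B ∪ Tset t (max A.card k)).card :=
          card_le_card (union_subset_union_right (Tset_mono t (by omega)))
        exact h1.trans (ih.1 (max A.card k))
      constructor
      · intro k
        rw [hstepA, hstepB]
        exact key k
      · rw [hstepA, hstepB]
        have h1 : (B ∪ Tset t B.card).card ≤ (B ∪ Tset t A.card).card :=
          card_le_card (union_subset_union_right (Tset_mono t hba))
        exact h1.trans (ih.1 A.card)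
  exact (main τ).2
end

section
/- Root-in-target decomposition on trees: Let T be a finite tree with vertex set V and threshold function t : V → ℕ, rooted at a vertex r whose children (i.e., neighbors) are v₁, …, v_d. For each i, let T(vᵢ) be the subtree of T − r containing vᵢ (equivalently, the connected component of the graph obtained from T by deleting r that contains vᵢ), and let tᵢ' be the threshold function on T(vᵢ) that equals t except that tᵢ'(vᵢ) = t(vᵢ) − 1 (truncated subtraction in ℕ). Then for every target set S ⊆ V with r ∈ S and every round τ ≥ 0, Active_T[S,τ] = {r} ∪ ⋃_{i=1}^{d} Active_{T(vᵢ), tᵢ'}[S ∩ V(T(vᵢ)), τ]. -/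
open Classical

/-- `treeComponent G r c` is the set of vertices of the connected component of `G − r`
containing `c` (the subtree hanging from the child `c` when the tree `G` is rooted at `r`). -/
def treeComponent {V : Type*} (G : SimpleGraph V) (r c : V) : Set V :=
  {w : V | ∃ (hw : w ≠ r) (hc : c ≠ r),
    (G.induce {x : V | x ≠ r}).Reachable ⟨w, hw⟩ ⟨c, hc⟩}

section Helpers
variable {V : Type*} {G : SimpleGraph V} {r : V}

lemma reach_induce_of_walk {s : Set V} {a b : V} (p : G.Walk a b)
    (hp : ∀ x ∈ p.support, x ∈ s) :
    (G.induce s).Reachable ⟨a, hp a p.start_mem_support⟩ ⟨b, hp b p.end_mem_support⟩ := by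
  induction p with
  | nil => exact SimpleGraph.Reachable.refl _
  | @cons u v w h q ih =>
      have h2 := ih (fun x hx => hp x (by simp [hx]))
      refine SimpleGraph.Reachable.trans (SimpleGraph.Adj.reachable ?_) h2
      exact h

lemma walk_of_induce {s : Set V} {a b : ↥s} (p : (G.induce s).Walk a b) :
    ∃ q : G.Walk a.1 b.1, ∀ x ∈ q.support, x ∈ s := by
  induction p with
  | @nil u => exact ⟨SimpleGraph.Walk.nil, by intro x hx; simp at hx; subst hx; exact u.2⟩
  | @cons u v w h q ih =>
      obtain ⟨p', hp'⟩ := ih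
      refine ⟨SimpleGraph.Walk.cons (show G.Adj u.1 v.1 from h) p', ?_⟩
      intro x hx
      rw [SimpleGraph.Walk.support_cons, List.mem_cons] at hx
      rcases hx with rfl | hx'
      · exact u.2
      · exact hp' x hx'

lemma exists_walk_of_reach_induce {s : Set V} {a b : ↥s}
    (h : (G.induce s).Reachable a b) :
    ∃ p : G.Walk a.1 b.1, ∀ x ∈ p.support, x ∈ s := by
  obtain ⟨p⟩ := h
  exact walk_of_induce p

lemma mem_treeComponent_iff' {w c : V} (hw : w ≠ r) (hc : c ≠ r) :
    w ∈ treeComponent G r c ↔ ∃ p : G.Walk w c, r ∉ p.support := by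
  constructor
  · rintro ⟨_, _, hre⟩
    obtain ⟨p, hp⟩ := exists_walk_of_reach_induce hre
    exact ⟨p, fun hrp => (hp r hrp) rfl⟩
  · rintro ⟨p, hp⟩
    refine ⟨hw, hc, reach_induce_of_walk p ?_⟩
    intro x hx hxr
    subst hxr
    exact hp hx

lemma r_not_mem_treeComponent {c : V} : r ∉ treeComponent G r c := by
  rintro ⟨h, -⟩; exact h rfl

lemma ne_r_of_mem_treeComponent {c w : V} (h : w ∈ treeComponent G r c) : w ≠ r := h.1

lemma self_mem_treeComponent {c : V} (h : G.Adj r c) : c ∈ treeComponent G r c :=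
  ⟨h.ne', h.ne', SimpleGraph.Reachable.refl _⟩

lemma treeComponent_closed {c w x : V} (hw : w ∈ treeComponent G r c)
    (hadj : G.Adj w x) (hx : x ≠ r) : x ∈ treeComponent G r c := by
  have hc : c ≠ r := hw.2.1
  obtain ⟨p, hp⟩ := (mem_treeComponent_iff' hw.1 hc).1 hw
  refine (mem_treeComponent_iff' hx hc).2 ⟨SimpleGraph.Walk.cons hadj.symm p, ?_⟩
  intro hmem
  rw [SimpleGraph.Walk.support_cons, List.mem_cons] at hmem
  rcases hmem with h1 | h2
  · exact hx h1.symm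
  · exact hp h2

/-- components of distinct children are disjoint -/
lemma treeComponent_unique (hG : G.IsTree) {c c' w : V} (hc : G.Adj r c)
    (hc' : G.Adj r c') (h1 : w ∈ treeComponent G r c) (h2 : w ∈ treeComponent G r c') :
    c = c' := by
  by_contra hne
  obtain ⟨hw, hcr, R1⟩ := h1
  obtain ⟨hw2, hcr', R2⟩ := h2
  obtain ⟨p, hp⟩ := exists_walk_of_reach_induce (R1.symm.trans R2)
  -- p : walk from c to c' avoiding r
  have hrp : r ∉ (p.toPath : G.Walk c c').support :=
    fun hm => (hp r (SimpleGraph.Walk.support_toPath_subset p hm)) rfl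
  have hpath1 : (p.toPath : G.Walk c c').IsPath := p.toPath.2
  have hpath2 : (SimpleGraph.Walk.cons hc.symm (SimpleGraph.Walk.cons hc' SimpleGraph.Walk.nil) :
      G.Walk c c').IsPath := by
    simp [SimpleGraph.Walk.cons_isPath_iff, hc.ne', hc'.ne, hc'.ne', hne]
  have := (hG.existsUnique_path c c').unique hpath1 hpath2
  rw [this] at hrp
  simp at hrp

lemma exists_treeComponent (hG : G.IsTree) {w : V} (hw : w ≠ r) :
    ∃ c, G.Adj r c ∧ w ∈ treeComponent G r c := by
  obtain ⟨p, hp, -⟩ := hG.existsUnique_path r w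
  cases p with
  | nil => exact absurd rfl hw
  | @cons _ c _ h q =>
      have hq := (SimpleGraph.Walk.cons_isPath_iff h q).1 hp
      refine ⟨c, h, (mem_treeComponent_iff' hw h.ne').2 ⟨q.reverse, ?_⟩⟩
      rw [SimpleGraph.Walk.support_reverse]
      simpa using hq.2

end Helpers


lemma mem_of_mem_image_val {α : Type*} {s : Set α} {F : Finset ↥s} {u : α}
    (h : u ∈ F.image Subtype.val) : u ∈ s := by
  obtain ⟨a, -, rfl⟩ := Finset.mem_image.1 h
  exact a.2

lemma mem_image_val_iff {α : Type*} {s : Set α} {F : Finset ↥s} {u : α} (hu : u ∈ s) :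
    u ∈ F.image Subtype.val ↔ (⟨u, hu⟩ : ↥s) ∈ F := by
  constructor
  · intro h
    obtain ⟨a, ha, rfl⟩ := Finset.mem_image.1 h
    rwa [Subtype.coe_eta]
  · intro h
    exact Finset.mem_image.2 ⟨_, h, rfl⟩

lemma subset_active {V : Type*} [Fintype V] (G : SimpleGraph V) (t : V → ℕ) (S : Finset V) :
    ∀ τ, S ⊆ Active G t S τ
  | 0 => subset_rfl
  | τ + 1 => (subset_active G t S τ).trans Finset.subset_union_left

lemma Active_succ {V : Type*} [Fintype V] (G : SimpleGraph V) (t : V → ℕ)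
    (S : Finset V) (τ : ℕ) :
    Active G t S (τ + 1) = Active G t S τ ∪
      Finset.univ.filter fun u => t u ≤ (G.neighborFinset u ∩ Active G t S τ).card := by
  rfl

/-- Root-in-target decomposition on trees: if the tree `G` is rooted at `r ∈ S`, then the
activation process in `G` equals `{r}` together with the union, over all children `c` of
`r`, of the activation processes in the subtrees `T(c)` (with the threshold of `c`
decreased by one) started from the corresponding parts of `S`. -/
theorem active_tree_root_decomposition {V : Type*} [Fintype V] (G : SimpleGraph V)
    (hG : G.IsTree) (t : V → ℕ) (r : V) (S : Finset V) (hr : r ∈ S) (τ : ℕ) :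
    Active G t S τ =
      insert r ((G.neighborFinset r).biUnion fun c =>
        (Active (G.induce (treeComponent G r c))
          (fun u => if u.1 = c then t c - 1 else t u.1)
          (S.subtype (· ∈ treeComponent G r c)) τ).image Subtype.val) := by
  induction τ with
  | zero =>
      ext x
      simp only [Active, Finset.mem_insert, Finset.mem_biUnion,
        SimpleGraph.mem_neighborFinset, Finset.mem_image, Finset.mem_subtype]
      constructor
      · intro hx
        by_cases hxr : x = r
        · exact Or.inl hxr
        · obtain ⟨c, hc, hmem⟩ := exists_treeComponent hG hxr
          exact Or.inr ⟨c, hc, ⟨x, hmem⟩, hx, rfl⟩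
      · rintro (rfl | ⟨c, hc, a, ha, rfl⟩)
        · exact hr
        · exact ha
  | succ τ ih =>
      ext u
      by_cases hur : u = r
      · subst hur
        constructor
        · intro _
          exact Finset.mem_insert_self _ _
        · intro _
          rw [Active_succ]
          exact Finset.mem_union_left _ (subset_active G t S τ hr)
      · obtain ⟨c, hc, huc⟩ := exists_treeComponent hG hur
        set s : Set V := treeComponent G r c with hs
        set t' : ↥s → ℕ := fun x => if x.1 = c then t c - 1 else t x.1 with ht'
        set u' : ↥s := ⟨u, huc⟩ with hu'
        letI : DecidableEq ↥s := fun a b => Classical.propDecidable (a = b)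
        set A' : Finset ↥s :=
          Active (G.induce s) t' (S.subtype (· ∈ s)) τ with hA'
        -- membership in round τ via IH
        have hmemτ : u ∈ Active G t S τ ↔ u' ∈ A' := by
          rw [ih]
          simp only [Finset.mem_insert, Finset.mem_biUnion,
            SimpleGraph.mem_neighborFinset]
          constructor
          · rintro (rfl | ⟨c2, hc2, hx⟩)
            · exact absurd rfl hur
            · have hx2 : u ∈ treeComponent G r c2 := mem_of_mem_image_val hx
              have hcc : c2 = c := treeComponent_unique hG hc2 hc hx2 huc
              subst hcc
              exact (mem_image_val_iff huc).1 hx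
          · intro h
            exact Or.inr ⟨c, hc, Finset.mem_image.2 ⟨u', h, rfl⟩⟩
        -- neighborhood decomposition
        have hNset : G.neighborFinset u ∩ Active G t S τ =
            (((G.induce s).neighborFinset u' ∩ A').image Subtype.val) ∪
              (if u = c then {r} else ∅) := by
          ext x
          simp only [Finset.mem_inter, SimpleGraph.mem_neighborFinset,
            Finset.mem_union, Finset.mem_image]
          constructor
          · rintro ⟨hadj, hact⟩
            by_cases hxr : x = r
            · have hadj' : G.Adj r u := by
                rw [← hxr]; exact hadj.symm
              have huc2 : u ∈ treeComponent G r u := self_mem_treeComponent hadj'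
              have hcu : c = u := treeComponent_unique hG hc hadj' huc huc2
              refine Or.inr ?_
              rw [if_pos hcu.symm, Finset.mem_singleton]
              exact hxr
            · rw [ih] at hact
              simp only [Finset.mem_insert, Finset.mem_biUnion,
                SimpleGraph.mem_neighborFinset] at hact
              rcases hact with rfl | ⟨c2, hc2, hx⟩
              · exact absurd rfl hxr
              · have hx2 : x ∈ treeComponent G r c2 := mem_of_mem_image_val hx
                have hx3 : x ∈ s := treeComponent_closed huc hadj hxr
                have hcc : c2 = c := treeComponent_unique hG hc2 hc hx2 hx3
                subst hcc
                refine Or.inl ⟨⟨x, hx3⟩, ⟨?_, ?_⟩, rfl⟩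
                · exact hadj
                · exact (mem_image_val_iff hx3).1 hx
          · rintro (⟨a, ha, rfl⟩ | hx)
            · refine ⟨ha.1, ?_⟩
              rw [ih]
              simp only [Finset.mem_insert, Finset.mem_biUnion,
                SimpleGraph.mem_neighborFinset]
              exact Or.inr ⟨c, hc, Finset.mem_image.2 ⟨a, ha.2, rfl⟩⟩
            · by_cases h : u = c
              · rw [if_pos h, Finset.mem_singleton] at hx
                constructor
                · rw [h, hx]; exact hc.symm
                · rw [hx]; exact subset_active G t S τ hr
              · rw [if_neg h] at hx
                simp at hx
        have hcard : (G.neighborFinset u ∩ Active G t S τ).card =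
            ((G.induce s).neighborFinset u' ∩ A').card + (if u = c then 1 else 0) := by
          rw [hNset, Finset.card_union_of_disjoint,
            Finset.card_image_of_injective _ Subtype.val_injective]
          · congr 1
            by_cases h : u = c <;> simp [h]
          · rw [Finset.disjoint_left]
            intro x hx hx2
            have hxs : x ∈ s := mem_of_mem_image_val hx
            have hxr : x ≠ r := ne_r_of_mem_treeComponent hxs
            by_cases h : u = c
            · rw [if_pos h, Finset.mem_singleton] at hx2
              exact hxr hx2
            · rw [if_neg h] at hx2
              simp at hx2
        -- threshold equivalence
        have hthr : (t u ≤ (G.neighborFinset u ∩ Active G t S τ).card) ↔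
            (t' u' ≤ ((G.induce s).neighborFinset u' ∩ A').card) := by
          rw [hcard]
          by_cases h : u = c
          · have e1 : t' u' = t c - 1 := if_pos h
            rw [e1, if_pos h, h]
            omega
          · have e1 : t' u' = t u := if_neg h
            rw [e1, if_neg h]
            omega
        -- assembling both sides
        rw [Active_succ, Finset.mem_union, Finset.mem_filter]
        constructor
        · intro hu
          have hu2 : u' ∈ A' ∨ t' u' ≤ ((G.induce s).neighborFinset u' ∩ A').card := by
            rcases hu with h | ⟨-, h⟩
            · exact Or.inl (hmemτ.1 h)
            · exact Or.inr (hthr.1 h)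
          refine Finset.mem_insert.2 (Or.inr (Finset.mem_biUnion.2
            ⟨c, (SimpleGraph.mem_neighborFinset _ _ _).2 hc, ?_⟩))
          refine (mem_image_val_iff huc).2 ?_
          rw [Active_succ, Finset.mem_union, Finset.mem_filter]
          rcases hu2 with h | h
          · exact Or.inl h
          · exact Or.inr ⟨Finset.mem_univ _, h⟩
        · intro hu
          rcases Finset.mem_insert.1 hu with h | hu2
          · exact absurd h hur
          obtain ⟨c2, hc2, hx⟩ := Finset.mem_biUnion.1 hu2
          rw [SimpleGraph.mem_neighborFinset] at hc2
          have hx2 : u ∈ treeComponent G r c2 := mem_of_mem_image_val hx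
          have hcc : c2 = c := treeComponent_unique hG hc2 hc hx2 huc
          subst hcc
          have hu3 := (mem_image_val_iff huc).1 hx
          rw [Active_succ, Finset.mem_union, Finset.mem_filter] at hu3
          rcases hu3 with h | ⟨-, h⟩
          · exact Or.inl (hmemτ.2 h)
          · exact Or.inr ⟨Finset.mem_univ _, hthr.2 h⟩
end

section
/- Cycle-to-path reduction for untargeted high-threshold vertices: Let C_n be the cycle on n ≥ 3 vertices with vertex set V and threshold function t : V → ℕ, let v ∈ V satisfy t(v) ≥ 2, and let P = C_n − v be the path obtained by deleting v (with thresholds restricted from t). Then for every target set S ⊆ V with v ∉ S and every round τ ≥ 0, Active_{C_n}[S,τ] ∖ {v} = Active_{P}[S,τ]. Consequently, |Active_{C_n}[S,λ]| equals |Active_{P}[S,λ]| plus 1 if v ∈ Active_{C_n}[S,λ] and equals |Active_{P}[S,λ]| otherwise. -/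
open Classical

lemma Active_zero {V : Type*} [Fintype V] (G : SimpleGraph V) (t : V → ℕ)
    (S : Finset V) : Active G t S 0 = S := by rw [Active]

lemma nbf_congr {V : Type*} (G : SimpleGraph V) (u : V)
    (i j : Fintype (G.neighborSet u)) :
    @SimpleGraph.neighborFinset _ G u i = @SimpleGraph.neighborFinset _ G u j := by
  ext x
  rw [@SimpleGraph.mem_neighborFinset _ _ _ i, @SimpleGraph.mem_neighborFinset _ _ _ j]

theorem gen_reduction {V : Type*} [Fintype V] (G : SimpleGraph V) (t : V → ℕ) (v : V)
    [Fintype {w : V | w ≠ v}]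
    (hdeg : (G.neighborFinset v).card = 2) (htv : 2 ≤ t v) (S : Finset V) (hv : v ∉ S)
    (S' : Finset {w : V | w ≠ v}) (hS'mem : ∀ w' : {w : V | w ≠ v}, w' ∈ S' ↔ ↑w' ∈ S) :
    (∀ τ : ℕ,
      (Active G t S τ).erase v =
        (Active (G.induce {w : V | w ≠ v}) (fun w => t w.1) S' τ).image Subtype.val)
    ∧
    (∀ lam : ℕ,
      (Active G t S lam).card =
        (Active (G.induce {w : V | w ≠ v}) (fun w => t w.1) S' lam).card +
        (if v ∈ Active G t S lam then 1 else 0)) := by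
  set G' := G.induce {w : V | w ≠ v} with hG'
  set A := Active G t S with hA
  set A' := Active G' (fun w => t w.1) S' with hA'
  have keycard : ∀ (d : DecidableEq {w : V | w ≠ v}) (B : Finset V)
      (B' : Finset {w : V | w ≠ v}),
      B.erase v = B'.image Subtype.val → ∀ (u : {w : V | w ≠ v}) (i : Fintype (G'.neighborSet u)),
      (@Inter.inter _ (@Finset.instInter _ d) (@SimpleGraph.neighborFinset _ G' u i) B').card
        = (G.neighborFinset u.1 ∩ B.erase v).card := by
    intro d B B' hB u i
    have himg : (@Inter.inter _ (@Finset.instInter _ d) (@SimpleGraph.neighborFinset _ G' u i) B').image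
        Subtype.val = G.neighborFinset u.1 ∩ B.erase v := by
      ext w
      simp only [Finset.mem_image, Finset.mem_inter, SimpleGraph.mem_neighborFinset,
        Finset.mem_erase, hB]
      constructor
      · rintro ⟨w', ⟨hadj, hw'⟩, rfl⟩
        exact ⟨hadj, ⟨w', hw', rfl⟩⟩
      · rintro ⟨hadj, w', hw', rfl⟩
        exact ⟨w', ⟨hadj, hw'⟩, rfl⟩
    rw [← himg, Finset.card_image_of_injective _ Subtype.val_injective]
  have main : ∀ τ : ℕ, (A τ).erase v = (A' τ).image Subtype.val ∧
      (v ∈ A τ → ∀ u, G.Adj v u → u ∈ A τ) := by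
    intro τ
    induction τ with
    | zero =>
      rw [hA, hA', Active_zero, Active_zero]
      constructor
      · ext w
        simp only [Finset.mem_erase, Finset.mem_image]
        constructor
        · rintro ⟨hne, hw⟩; exact ⟨⟨w, hne⟩, (hS'mem _).2 hw, rfl⟩
        · rintro ⟨w', hw', rfl⟩; exact ⟨w'.2, (hS'mem _).1 hw'⟩
      · intro hvS; exact absurd hvS hv
    | succ τ ih =>
      obtain ⟨ih1, ih2⟩ := ih
      have hsub : A τ ⊆ A (τ + 1) := by
        rw [hA, Active_succ]
        exact Finset.subset_union_left
      have part2 : v ∈ A (τ + 1) → ∀ u, G.Adj v u → u ∈ A (τ + 1) := by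
        intro hvA u hadj
        rw [hA, Active_succ, ← hA, Finset.mem_union] at hvA
        rcases hvA with h | h
        · exact hsub (ih2 h u hadj)
        · have ht : t v ≤ (G.neighborFinset v ∩ A τ).card := (Finset.mem_filter.1 h).2
          have hle : (G.neighborFinset v).card ≤ (G.neighborFinset v ∩ A τ).card := by
            omega
          have heq := Finset.eq_of_subset_of_card_le Finset.inter_subset_left hle
          have hu : u ∈ G.neighborFinset v ∩ A τ := by
            rw [heq]; exact (SimpleGraph.mem_neighborFinset _ _ _).2 hadj
          exact hsub (Finset.mem_inter.1 hu).2
      refine ⟨?_, part2⟩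
      rw [hA, hA', Active_succ, Active_succ, ← hA, ← hA']
      ext w
      simp only [Finset.mem_erase, Finset.mem_image, Finset.mem_union, Finset.mem_filter,
        Finset.mem_univ, true_and]
      constructor
      · rintro ⟨hne, hw⟩
        rcases hw with h | h
        · have : w ∈ (A' τ).image Subtype.val := by
            rw [← ih1]; exact Finset.mem_erase.2 ⟨hne, h⟩
          obtain ⟨w', hw', rfl⟩ := Finset.mem_image.1 this
          exact ⟨w', Or.inl hw', rfl⟩
        · set w' : {x : V | x ≠ v} := ⟨w, hne⟩ with hw'def
          by_cases hvin : v ∈ G.neighborFinset w ∩ A τ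
          · have hadj : G.Adj v w :=
              ((SimpleGraph.mem_neighborFinset _ _ _).1 (Finset.mem_inter.1 hvin).1).symm
            have hwA : w ∈ A τ := ih2 (Finset.mem_inter.1 hvin).2 w hadj
            have : w ∈ (A' τ).image Subtype.val := by
              rw [← ih1]; exact Finset.mem_erase.2 ⟨hne, hwA⟩
            obtain ⟨w'', hw'', rfl⟩ := Finset.mem_image.1 this
            exact ⟨w'', Or.inl hw'', rfl⟩
          · have heq : G.neighborFinset w ∩ A τ = G.neighborFinset w ∩ (A τ).erase v := by
              ext x
              simp only [Finset.mem_inter, Finset.mem_erase]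
              constructor
              · rintro ⟨h1, h2⟩
                refine ⟨h1, ?_, h2⟩
                rintro rfl
                exact hvin (Finset.mem_inter.2 ⟨h1, h2⟩)
              · tauto
            refine ⟨w', Or.inr ?_, rfl⟩
            rw [keycard _ (A τ) (A' τ) ih1 w', ← heq]
            exact h
      · rintro ⟨w', hw', rfl⟩
        refine ⟨w'.2, ?_⟩
        rcases hw' with h | h
        · have : (w' : V) ∈ (A τ).erase v := by
            rw [ih1]; exact Finset.mem_image.2 ⟨w', h, rfl⟩
          exact Or.inl (Finset.mem_erase.1 this).2
        · have ht2 : t w'.1 ≤ (G.neighborFinset w'.1 ∩ A τ).card := by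
            rw [keycard _ (A τ) (A' τ) ih1 w'] at h
            refine h.trans (Finset.card_le_card ?_)
            exact Finset.inter_subset_inter (le_refl _) (Finset.erase_subset _ _)
          exact Or.inr ht2
  refine ⟨fun τ => (main τ).1, fun lam => ?_⟩
  have h1 : ((A lam).erase v).card = (A' lam).card := by
    rw [(main lam).1, Finset.card_image_of_injective _ Subtype.val_injective]
  by_cases hvl : v ∈ A lam
  · rw [if_pos hvl, ← h1, Finset.card_erase_of_mem hvl]
    have : 0 < (A lam).card := Finset.card_pos.2 ⟨v, hvl⟩
    omega
  · rw [if_neg hvl, ← h1, Finset.erase_eq_of_notMem hvl]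
    omega


set_option maxHeartbeats 1000000 in
/-- Cycle-to-path reduction for untargeted high-threshold vertices: if `t v ≥ 2` and
`v ∉ S`, then at every round the activation process in the cycle `C_n`, with `v` removed,
coincides with the activation process in the path `C_n − v`; consequently the number of
influenced vertices in the cycle equals the number in the path, plus one exactly when `v`
itself is influenced. -/
theorem cycle_to_path_reduction (n : ℕ) (hn : 3 ≤ n) (t : Fin n → ℕ) (v : Fin n)
    (htv : 2 ≤ t v) (S : Finset (Fin n)) (hv : v ∉ S) :
    (∀ τ : ℕ,
      (Active (SimpleGraph.cycleGraph n) t S τ).erase v =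
        (Active ((SimpleGraph.cycleGraph n).induce {w : Fin n | w ≠ v})
          (fun w => t w.1) (S.subtype (· ∈ {w : Fin n | w ≠ v})) τ).image Subtype.val)
    ∧
    (∀ lam : ℕ,
      (Active (SimpleGraph.cycleGraph n) t S lam).card =
        (Active ((SimpleGraph.cycleGraph n).induce {w : Fin n | w ≠ v})
          (fun w => t w.1) (S.subtype (· ∈ {w : Fin n | w ≠ v})) lam).card +
        (if v ∈ Active (SimpleGraph.cycleGraph n) t S lam then 1 else 0)) := by
  obtain ⟨m, rfl⟩ : ∃ m, n = m + 3 := ⟨n - 3, by omega⟩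
  obtain ⟨g1, g2⟩ := gen_reduction (SimpleGraph.cycleGraph (m + 3)) t v
    (by rw [nbf_congr _ v _ (SimpleGraph.neighborSetFintype _ v)]
        exact SimpleGraph.cycleGraph_degree_three_le) htv S hv
    (S.subtype (· ∈ {w : Fin (m + 3) | w ≠ v})) (fun w' => Finset.mem_subtype)
  constructor
  · intro τ
    have h2 := Finset.ext_iff.1 (g1 τ)
    ext x
    have h3 := h2 x
    simp only [Finset.mem_erase, Finset.mem_image] at h3 ⊢
    exact h3
  · intro lam
    have h2 := g2 lam
    by_cases hvl : v ∈ Active (SimpleGraph.cycleGraph (m + 3)) t S lam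
    · simp only [if_pos hvl] at h2 ⊢
      exact h2
    · simp only [if_neg hvl] at h2 ⊢
      exact h2
end
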